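/- Let σ > 0 and Λ > 0. Then ∫ |x|·e^{−Λ·|x|} d(gaussianReal 0 σ²)(x) = σ·√(2/π) − Λ·σ² · ∫ e^{−Λ·|x|} d(gaussianReal 0 σ²)(x). Consequently, the exponentially reweighted mean of the half-normal distribution, E[|Z|·e^{−Λ|Z|}]/E[e^{−Λ|Z|}], equals −Λ·σ² + σ·√(2/π)/E[e^{−Λ|Z|}]. -/

import Mathlib

open MeasureTheory ProbabilityTheory Real Filter Set
open scoped NNReal ENNReal

lemma integral_gaussianReal_eq {v : ℝ≥0} (hv : v ≠ 0) (g : ℝ → ℝ) :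
    ∫ x, g x ∂(gaussianReal 0 v) = ∫ x, gaussianPDFReal 0 v x * g x := by
  rw [gaussianReal_of_var_ne_zero _ hv]
  have h : gaussianPDF 0 v = fun x => ((gaussianPDFReal 0 v x).toNNReal : ℝ≥0∞) := rfl
  rw [h, integral_withDensity_eq_integral_smul
    ((measurable_gaussianPDFReal 0 v).real_toNNReal)]
  congr 1
  ext x
  rw [NNReal.smul_def, smul_eq_mul, Real.coe_toNNReal _ (gaussianPDFReal_nonneg 0 v x)]

/-- Exponentially reweighted mean of the half-normal distribution with scale
`σ`: `∫ |x|·e^{−Λ|x|} = σ·√(2/π) − Λσ²·∫ e^{−Λ|x|}` (all integrals w.r.t.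
`gaussianReal 0 σ²`), hence `E[|Z|e^{−Λ|Z|}]/E[e^{−Λ|Z|}] = −Λσ² +
σ·√(2/π)/E[e^{−Λ|Z|}]`. -/
theorem halfNormal_tilted_mean (σ : ℝ≥0) (hσ : 0 < σ) (Λ : ℝ) (hΛ : 0 < Λ) :
    (∫ x, |x| * Real.exp (-Λ * |x|) ∂(gaussianReal 0 (σ ^ 2)) =
      (σ : ℝ) * Real.sqrt (2 / Real.pi) -
        Λ * (σ : ℝ) ^ 2 *
          ∫ x, Real.exp (-Λ * |x|) ∂(gaussianReal 0 (σ ^ 2))) ∧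
    (∫ x, |x| * Real.exp (-Λ * |x|) ∂(gaussianReal 0 (σ ^ 2))) /
        (∫ x, Real.exp (-Λ * |x|) ∂(gaussianReal 0 (σ ^ 2))) =
      -(Λ * (σ : ℝ) ^ 2) +
        (σ : ℝ) * Real.sqrt (2 / Real.pi) /
          ∫ x, Real.exp (-Λ * |x|) ∂(gaussianReal 0 (σ ^ 2)) := by
  have hv : (σ ^ 2 : ℝ≥0) ≠ 0 := pow_ne_zero 2 hσ.ne'
  set s : ℝ := (σ : ℝ) ^ 2 with hs_def
  have hs : 0 < s := by positivity
  set p : ℝ → ℝ := gaussianPDFReal 0 (σ ^ 2) with hp_def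
  set c : ℝ := (Real.sqrt (2 * Real.pi * s))⁻¹ with hc_def
  have hπ : 0 < Real.pi := Real.pi_pos
  have hcpos : 0 < c := by positivity
  have hp : ∀ x, p x = c * Real.exp (-x ^ 2 / (2 * s)) := by
    intro x
    simp only [hp_def, gaussianPDFReal, sub_zero, hc_def]
    norm_num [hs_def]
  have hpnn : ∀ x, 0 ≤ p x := gaussianPDFReal_nonneg 0 (σ ^ 2)
  have hpabs : ∀ x, p |x| = p x := by
    intro x; rw [hp x, hp |x|, sq_abs]
  have hpmeas : Measurable p := measurable_gaussianPDFReal 0 (σ ^ 2)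
  have hpint : Integrable p := integrable_gaussianPDFReal 0 (σ ^ 2)
  -- boundedness facts
  have hbd1 : ∀ x : ℝ, |(|x| * Real.exp (-Λ * |x|))| ≤ 1 / Λ := by
    intro x
    have h1 : 0 ≤ |x| * Real.exp (-Λ * |x|) := by positivity
    rw [abs_of_nonneg h1, le_div_iff₀ hΛ]
    have h2 : Λ * |x| ≤ Real.exp (Λ * |x|) := by
      have := Real.add_one_le_exp (Λ * |x|); linarith
    have h3 : Real.exp (-Λ * |x|) = (Real.exp (Λ * |x|))⁻¹ := by
      rw [← Real.exp_neg]; ring_nf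
    rw [h3]
    have h4 : |x| * (Real.exp (Λ * |x|))⁻¹ * Λ = Λ * |x| * (Real.exp (Λ * |x|))⁻¹ := by ring
    rw [h4]
    calc Λ * |x| * (Real.exp (Λ * |x|))⁻¹ ≤ Real.exp (Λ * |x|) * (Real.exp (Λ * |x|))⁻¹ :=
          mul_le_mul_of_nonneg_right h2 (by positivity)
      _ = 1 := mul_inv_cancel₀ (Real.exp_pos _).ne'
  have hbd2 : ∀ x : ℝ, |Real.exp (-Λ * |x|)| ≤ 1 := by
    intro x
    rw [abs_of_nonneg (Real.exp_pos _).le]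
    exact Real.exp_le_one_iff.mpr (by nlinarith [abs_nonneg x])
  -- global integrability of the two products
  have hcont1 : Continuous (fun x : ℝ => |x| * Real.exp (-Λ * |x|)) := by
    exact (continuous_abs).mul ((continuous_const.mul continuous_abs).rexp)
  have hcont2 : Continuous (fun x : ℝ => Real.exp (-Λ * |x|)) := by
    exact (continuous_const.mul continuous_abs).rexp
  have hint1 : Integrable (fun x => |x| * Real.exp (-Λ * |x|) * p x) :=
    hpint.bdd_mul hcont1.aestronglyMeasurable (c := 1 / Λ) (Eventually.of_forall fun x => hbd1 x)
  have hint2 : Integrable (fun x => Real.exp (-Λ * |x|) * p x) :=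
    hpint.bdd_mul hcont2.aestronglyMeasurable (c := 1) (Eventually.of_forall fun x => hbd2 x)
  -- FTC computation on Ioi 0
  set F : ℝ → ℝ := fun x => -s * (Real.exp (-Λ * x) * p x) with hF_def
  have hderiv : ∀ x : ℝ, HasDerivAt F ((x + Λ * s) * (Real.exp (-Λ * x) * p x)) x := by
    intro x
    have he : HasDerivAt (fun y => Real.exp (-Λ * y)) (-Λ * Real.exp (-Λ * x)) x := by
      have := ((hasDerivAt_id x).const_mul (-Λ)).exp
      simpa [mul_comm] using this
    have hinner : HasDerivAt (fun y : ℝ => -y ^ 2 / (2 * s)) (-x / s) x := by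
      have h := ((hasDerivAt_pow 2 x).neg).div_const (2 * s)
      refine h.congr_deriv ?_
      field_simp; ring
    have hpd : HasDerivAt p (p x * (-x / s)) x := by
      have h := (hinner.exp).const_mul c
      have hfun : p = fun y => c * Real.exp (-y ^ 2 / (2 * s)) := funext hp
      rw [hfun]
      simpa [mul_assoc] using h
    have hF : HasDerivAt F
        (-s * ((-Λ * Real.exp (-Λ * x)) * p x + Real.exp (-Λ * x) * (p x * (-x / s)))) x :=
      (he.mul hpd).const_mul (-s)
    convert hF using 1
    field_simp
    ring
  have hA : Tendsto (fun x : ℝ => Real.exp (-Λ * x)) atTop (nhds 0) := by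
    have h1 : Tendsto (fun x : ℝ => Λ * x) atTop atTop :=
      Tendsto.const_mul_atTop hΛ tendsto_id
    have := Real.tendsto_exp_neg_atTop_nhds_zero.comp h1
    simpa [Function.comp_def, neg_mul] using this
  have htendsto : Tendsto F atTop (nhds 0) := by
    have hub : ∀ x : ℝ, Real.exp (-Λ * x) * p x ≤ c * Real.exp (-Λ * x) := by
      intro x
      rw [hp x]
      have h1 : Real.exp (-x ^ 2 / (2 * s)) ≤ 1 :=
        Real.exp_le_one_iff.mpr (div_nonpos_of_nonpos_of_nonneg
          (neg_nonpos.mpr (sq_nonneg x)) (by positivity))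
      calc Real.exp (-Λ * x) * (c * Real.exp (-x ^ 2 / (2 * s)))
          = c * Real.exp (-x ^ 2 / (2 * s)) * Real.exp (-Λ * x) := by ring
        _ ≤ c * 1 * Real.exp (-Λ * x) := by
            apply mul_le_mul_of_nonneg_right _ (Real.exp_pos _).le
            exact mul_le_mul_of_nonneg_left h1 hcpos.le
        _ = c * Real.exp (-Λ * x) := by ring
    have hupper : Tendsto (fun x : ℝ => c * Real.exp (-Λ * x)) atTop (nhds 0) := by
      have := hA.const_mul c; simpa using this
    have hb : Tendsto (fun x : ℝ => Real.exp (-Λ * x) * p x) atTop (nhds 0) :=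
      squeeze_zero (fun x => mul_nonneg (Real.exp_pos _).le (hpnn x)) hub hupper
    have h2 := hb.const_mul (-s)
    rw [mul_zero] at h2
    exact h2
  -- integrability of the derivative on Ioi 0
  have hintIoi : IntegrableOn
      (fun x => (x + Λ * s) * (Real.exp (-Λ * x) * p x)) (Ioi (0:ℝ)) := by
    have hsum : Integrable (fun x => |x| * Real.exp (-Λ * |x|) * p x
        + Λ * s * (Real.exp (-Λ * |x|) * p x)) :=
      hint1.add ((hint2.const_mul (Λ * s)).congr (by
        refine Eventually.of_forall fun x => ?_
        ring))
    refine (hsum.integrableOn).congr_fun (fun x hx => ?_) measurableSet_Ioi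
    have hxa : |x| = x := abs_of_pos hx
    simp only [hxa]; ring
  have hFTC : ∫ x in Ioi (0:ℝ), (x + Λ * s) * (Real.exp (-Λ * x) * p x) = s * p 0 := by
    have := integral_Ioi_of_hasDerivAt_of_tendsto' (a := 0) (f := F)
      (fun x _ => hderiv x) hintIoi htendsto
    rw [this, hF_def]
    simp
  -- move to Lebesgue integrals
  have e1 : ∫ x, |x| * Real.exp (-Λ * |x|) ∂(gaussianReal 0 (σ ^ 2)) =
      ∫ x, p x * (|x| * Real.exp (-Λ * |x|)) := integral_gaussianReal_eq hv _
  have e2 : ∫ x, Real.exp (-Λ * |x|) ∂(gaussianReal 0 (σ ^ 2)) =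
      ∫ x, p x * Real.exp (-Λ * |x|) := integral_gaussianReal_eq hv _
  set q : ℝ → ℝ := fun t => p t * (t * Real.exp (-Λ * t)) with hq_def
  set r : ℝ → ℝ := fun t => p t * Real.exp (-Λ * t) with hr_def
  have e1' : ∫ x, p x * (|x| * Real.exp (-Λ * |x|)) = 2 * ∫ x in Ioi (0:ℝ), q x := by
    rw [← integral_comp_abs (f := q)]
    congr 1
    ext x
    rw [hq_def]
    simp only []
    rw [hpabs x]
  have e2' : ∫ x, p x * Real.exp (-Λ * |x|) = 2 * ∫ x in Ioi (0:ℝ), r x := by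
    rw [← integral_comp_abs (f := r)]
    congr 1
    ext x
    rw [hr_def]
    simp only []
    rw [hpabs x]
  -- integrability on Ioi 0
  have hqint : IntegrableOn q (Ioi (0:ℝ)) := by
    refine (hint1.integrableOn).congr_fun (fun x hx => ?_) measurableSet_Ioi
    rw [hq_def]; simp only []
    rw [abs_of_pos hx]; ring
  have hrint : IntegrableOn r (Ioi (0:ℝ)) := by
    refine (hint2.integrableOn).congr_fun (fun x hx => ?_) measurableSet_Ioi
    rw [hr_def]; simp only []
    rw [abs_of_pos hx]; ring
  -- split the FTC integral
  have hsplit : (∫ x in Ioi (0:ℝ), q x) + Λ * s * ∫ x in Ioi (0:ℝ), r x = s * p 0 := by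
    rw [← hFTC, ← integral_const_mul, ← integral_add hqint (hrint.const_mul _)]
    refine setIntegral_congr_fun measurableSet_Ioi (fun x _ => ?_)
    rw [hq_def, hr_def]; simp only []
    ring
  -- the constant
  have hconst : 2 * (s * p 0) = (σ : ℝ) * Real.sqrt (2 / Real.pi) := by
    have hp0 : p 0 = c := by rw [hp 0]; norm_num
    rw [hp0, hc_def, hs_def]
    have hsqrt : Real.sqrt (2 * Real.pi * ((σ:ℝ) ^ 2)) = Real.sqrt (2 * Real.pi) * σ := by
      rw [Real.sqrt_mul (by positivity), Real.sqrt_sq σ.coe_nonneg]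
    rw [hsqrt]
    have h2 : Real.sqrt (2 / Real.pi) = 2 / Real.sqrt (2 * Real.pi) := by
      rw [eq_div_iff (by positivity)]
      rw [← Real.sqrt_mul (by positivity)]
      rw [show 2 / Real.pi * (2 * Real.pi) = 2 ^ 2 by field_simp]
      rw [Real.sqrt_sq (by norm_num)]
    rw [h2]
    have hsq : Real.sqrt (2 * Real.pi) ≠ 0 := by positivity
    field_simp
  -- first conjunct
  have hmain : ∫ x, |x| * Real.exp (-Λ * |x|) ∂(gaussianReal 0 (σ ^ 2)) =
      (σ : ℝ) * Real.sqrt (2 / Real.pi) -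
        Λ * s * ∫ x, Real.exp (-Λ * |x|) ∂(gaussianReal 0 (σ ^ 2)) := by
    rw [e1, e2, e1', e2', ← hconst]
    linarith [hsplit]
  -- denominator positive
  have hden : 0 < ∫ x, Real.exp (-Λ * |x|) ∂(gaussianReal 0 (σ ^ 2)) := by
    have : IsProbabilityMeasure (gaussianReal 0 (σ ^ 2)) := inferInstance
    refine integral_exp_pos ?_
    refine Integrable.mono' (integrable_const 1) hcont2.aestronglyMeasurable ?_
    exact Eventually.of_forall fun x => hbd2 x
  refine ⟨hmain, ?_⟩
  rw [hmain]
  set b := ∫ x, Real.exp (-Λ * |x|) ∂(gaussianReal 0 (σ ^ 2)) with hb_def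
  rw [sub_div, mul_div_assoc, mul_div_cancel_right₀ _ hden.ne']
  ring
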